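/- Let (R,m) be a noetherian local ring, M an R-module, U ⊆ M a submodule such that U is reflexive (with respect to Matlis duality) and M/U is quasi-reflexive. Then M is quasi-reflexive. -/

import Mathlib

open IsLocalRing Pointwise

universe u v

variable (R : Type u) [CommRing R]

/-- A submodule `A ⊆ B` is pure if for every module `X`, `X ⊗ A → X ⊗ B` is injective. -/
def IsPureSubmodule {B : Type v} [AddCommGroup B] [Module R B] (A : Submodule R B) : Prop :=
  ∀ (X : Type v) [AddCommGroup X] [Module R X],
    Function.Injective (LinearMap.lTensor X A.subtype)

/-- A linear map is a pure monomorphism if it is injective with pure range. -/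
def IsPureMono {M N : Type v} [AddCommGroup M] [Module R M]
    [AddCommGroup N] [Module R N] (f : M →ₗ[R] N) : Prop :=
  Function.Injective f ∧ IsPureSubmodule R (LinearMap.range f)

/-- A submodule `A ⊆ B` is pure-essential if it is pure and for every `X ⊆ B` with
`X ⊓ A = ⊥` and `(X ⊕ A)/X` pure in `B/X`, one has `X = ⊥`. -/
def IsPureEssential {B : Type v} [AddCommGroup B] [Module R B] (A : Submodule R B) : Prop :=
  IsPureSubmodule R A ∧
    ∀ X : Submodule R B, X ⊓ A = ⊥ → IsPureSubmodule R (A.map X.mkQ) → X = ⊥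

/-- An injective linear map is a pure-essential embedding if its range is pure-essential. -/
def IsPureEssentialEmb {M N : Type v} [AddCommGroup M] [Module R M]
    [AddCommGroup N] [Module R N] (f : M →ₗ[R] N) : Prop :=
  Function.Injective f ∧ IsPureEssential R (LinearMap.range f)

/-- `A ⊆ B` is strictly pure-essential if `A` is pure in `B` and every homomorphism out of `B`
restricting to a pure monomorphism on `A` is itself a pure monomorphism. -/
def IsStrictlyPureEssential {B : Type v} [AddCommGroup B] [Module R B]
    (A : Submodule R B) : Prop :=
  IsPureSubmodule R A ∧
    ∀ (Y : Type v) [AddCommGroup Y] [Module R Y] (f : B →ₗ[R] Y),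
      IsPureMono R (f ∘ₗ A.subtype) → IsPureMono R f

/-- `B` is an injective hull of `A` (via some embedding with essential range). -/
def IsInjectiveHull (A : Type v) (B : Type v) [AddCommGroup A] [Module R A]
    [AddCommGroup B] [Module R B] : Prop :=
  Module.Injective R B ∧ ∃ f : A →ₗ[R] B, Function.Injective f ∧
    ∀ X : Submodule R B, X ≠ ⊥ → X ⊓ LinearMap.range f ≠ ⊥

/-- The Matlis evaluation map `M → Hom(Hom(M,E),E)`. -/
noncomputable def matlisEval (E M : Type v) [AddCommGroup E] [Module R E]
    [AddCommGroup M] [Module R M] : M →ₗ[R] ((M →ₗ[R] E) →ₗ[R] E) :=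
  LinearMap.applyₗ

/-- `M` is Matlis-reflexive (w.r.t. `E`). -/
def IsMatlisReflexive (E M : Type v) [AddCommGroup E] [Module R E]
    [AddCommGroup M] [Module R M] : Prop :=
  Function.Bijective (matlisEval R E M)

/-- `M` is quasi-reflexive: the canonical map `M → M°°` is a pure-essential embedding. -/
def IsQuasiReflexive (E M : Type v) [AddCommGroup E] [Module R E]
    [AddCommGroup M] [Module R M] : Prop :=
  IsPureEssentialEmb R (matlisEval R E M)

/-- The largest radical-full submodule `P(M)` (sum of all `V` with `V = m V`). -/
def radicalFullPart [IsLocalRing R] (M : Type v) [AddCommGroup M] [Module R M] :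
    Submodule R M :=
  sSup {V : Submodule R M | V = maximalIdeal R • V}

/-- The largest divisible submodule `D(M)` (w.r.t. non-zerodivisors). -/
def divisiblePart (M : Type v) [AddCommGroup M] [Module R M] : Submodule R M :=
  sSup {V : Submodule R M | ∀ r ∈ nonZeroDivisors R, V ≤ r • V}

section AuxLemmas

open LinearMap TensorProduct

variable {R}

@[simp] lemma matlisEval_apply {E M : Type v} [AddCommGroup E] [Module R E]
    [AddCommGroup M] [Module R M] (m : M) (f : M →ₗ[R] E) :
    matlisEval R E M m f = f m := rfl

/-- factoring a linear map through a surjection whose kernel it kills -/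
lemma exists_factor {A B C : Type u} [AddCommGroup A] [Module R A] [AddCommGroup B] [Module R B]
    [AddCommGroup C] [Module R C] (g : A →ₗ[R] B) (hg : Function.Surjective g)
    (f : A →ₗ[R] C) (h : LinearMap.ker g ≤ LinearMap.ker f) :
    ∃ F : B →ₗ[R] C, ∀ a, F (g a) = f a := by
  let e := g.quotKerEquivOfSurjective hg
  refine ⟨((LinearMap.ker g).liftQ f h) ∘ₗ (e.symm : B →ₗ[R] A ⧸ LinearMap.ker g), fun a => ?_⟩
  have he : e (Submodule.Quotient.mk a) = g a := by
    simp [e, LinearMap.quotKerEquivOfSurjective, LinearMap.quotKerEquivRange_apply_mk]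
  have : e.symm (g a) = Submodule.Quotient.mk a := by
    rw [LinearEquiv.symm_apply_eq, he]
  simp [this]

variable [IsLocalRing R] {E : Type u} [AddCommGroup E] [Module R E]
  (hE : IsInjectiveHull R (R ⧸ maximalIdeal R) E)

include hE

/-- E is a cogenerator -/
lemma cogen {N : Type u} [AddCommGroup N] [Module R N] (y : N) (hy : y ≠ 0) :
    ∃ g : N →ₗ[R] E, g y ≠ 0 := by
  obtain ⟨hInj, f, hf, -⟩ := hE
  set ψ : R →ₗ[R] E := f ∘ₗ (maximalIdeal R).mkQ with hψ
  have h1 : ψ 1 ≠ 0 := by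
    intro h
    have : ((maximalIdeal R).mkQ 1 : R ⧸ maximalIdeal R) = 0 := by
      apply hf
      simpa [hψ] using h
    rw [Submodule.mkQ_apply, Submodule.Quotient.mk_eq_zero] at this
    exact (maximalIdeal R).ne_top_iff_one.mp (Ideal.IsMaximal.ne_top inferInstance) this
  set σ : R →ₗ[R] N := LinearMap.toSpanSingleton R N y with hσ
  have hker : LinearMap.ker σ ≤ LinearMap.ker ψ := by
    intro r hr
    have hry : r • y = 0 := hr
    have hrm : r ∈ maximalIdeal R := by
      by_contra hrm
      have hu : IsUnit r := by
        simpa [IsLocalRing.mem_maximalIdeal, mem_nonunits_iff, not_not] using hrm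
      obtain ⟨u, rfl⟩ := hu
      apply hy
      have h2 := congrArg (fun z => (↑u⁻¹ : R) • z) hry
      simpa [← mul_smul] using h2
    simp only [LinearMap.mem_ker, hψ, LinearMap.comp_apply, Submodule.mkQ_apply,
      (Submodule.Quotient.mk_eq_zero _).mpr hrm, map_zero]
  obtain ⟨φ, hφ⟩ := exists_factor σ.rangeRestrict (LinearMap.surjective_rangeRestrict σ) ψ
    (by rwa [LinearMap.ker_rangeRestrict])
  obtain ⟨g, hg⟩ := hInj.out (LinearMap.range σ).subtype (Submodule.injective_subtype _) φ
  refine ⟨g, ?_⟩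
  have hy' : y = (LinearMap.range σ).subtype (σ.rangeRestrict 1) := by
    simp [hσ]
  rw [hy', hg, hφ]
  simpa [hψ] using h1


lemma ev_inj {N : Type u} [AddCommGroup N] [Module R N] :
    Function.Injective (matlisEval R E N) := by
  rw [injective_iff_map_eq_zero]
  intro y h
  by_contra hy
  obtain ⟨g, hg⟩ := cogen hE y hy
  exact hg (by simpa using congrArg (fun ξ => ξ g) h)

lemma lTensor_ev_inj {N : Type u} [AddCommGroup N] [Module R N]
    (X : Type u) [AddCommGroup X] [Module R X] :
    Function.Injective (LinearMap.lTensor X (matlisEval R E N)) := by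
  rw [injective_iff_map_eq_zero]
  intro t ht
  by_contra ht0
  obtain ⟨g, hg⟩ := cogen hE t ht0
  set B : X →ₗ[R] (((N →ₗ[R] E) →ₗ[R] E) →ₗ[R] E) :=
    LinearMap.applyₗ ∘ₗ TensorProduct.curry g with hB
  set h : (X ⊗[R] ((N →ₗ[R] E) →ₗ[R] E)) →ₗ[R] E := TensorProduct.lift B with hh
  have key : h ∘ₗ LinearMap.lTensor X (matlisEval R E N) = g := by
    apply TensorProduct.ext'
    intro x n
    simp [hh, hB]
  apply hg
  rw [← key]
  simp [ht]


omit hE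

omit [IsLocalRing R] in
lemma isPureSubmodule_range {M N : Type u} [AddCommGroup M] [Module R M]
    [AddCommGroup N] [Module R N] (f : M →ₗ[R] N)
    (h : ∀ (X : Type u) [AddCommGroup X] [Module R X],
      Function.Injective (LinearMap.lTensor X f)) :
    IsPureSubmodule R (LinearMap.range f) := by
  intro X _ _
  have hcomp : (LinearMap.range f).subtype ∘ₗ f.rangeRestrict = f := rfl
  have hsurj : Function.Surjective (LinearMap.lTensor X f.rangeRestrict) :=
    LinearMap.lTensor_surjective X (LinearMap.surjective_rangeRestrict f)
  intro a b hab
  obtain ⟨a', rfl⟩ := hsurj a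
  obtain ⟨b', rfl⟩ := hsurj b
  have : LinearMap.lTensor X f a' = LinearMap.lTensor X f b' := by
    rw [← hcomp, LinearMap.lTensor_comp]
    exact hab
  rw [h X this]

omit [IsLocalRing R] in
lemma isPureSubmodule_map {C C' : Type u} [AddCommGroup C] [Module R C]
    [AddCommGroup C'] [Module R C'] (g : C →ₗ[R] C') (hg : Function.Surjective g)
    (A : Submodule R C) (hker : LinearMap.ker g ≤ A) (hA : IsPureSubmodule R A) :
    IsPureSubmodule R (A.map g) := by
  intro X _ _
  rw [injective_iff_map_eq_zero]
  intro t ht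
  set r : A →ₗ[R] (A.map g) := g.restrict (fun x hx => Submodule.mem_map_of_mem hx) with hr
  have hrsurj : Function.Surjective r := by
    rintro ⟨y, x, hx, rfl⟩
    exact ⟨⟨x, hx⟩, rfl⟩
  have hrcomm : (A.map g).subtype ∘ₗ r = g ∘ₗ A.subtype := rfl
  have hexact0 : Function.Exact (LinearMap.ker g).subtype g := by
    intro y
    constructor
    · intro hy
      exact ⟨⟨y, hy⟩, rfl⟩
    · rintro ⟨⟨x, hx⟩, rfl⟩
      exact hx
  have hexact := lTensor_exact (f := (LinearMap.ker g).subtype) (g := g) X hexact0 hg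
  obtain ⟨s, rfl⟩ := LinearMap.lTensor_surjective X hrsurj t
  have h2 : LinearMap.lTensor X g (LinearMap.lTensor X A.subtype s) = 0 := by
    rw [← LinearMap.lTensor_comp_apply, ← hrcomm, LinearMap.lTensor_comp_apply, ht]
  obtain ⟨d, hd⟩ := (hexact _).mp h2
  set d' := LinearMap.lTensor X (Submodule.inclusion hker) d with hd'
  have h3 : LinearMap.lTensor X A.subtype d' = LinearMap.lTensor X A.subtype s := by
    rw [hd', ← LinearMap.lTensor_comp_apply]
    have : A.subtype ∘ₗ Submodule.inclusion hker = (LinearMap.ker g).subtype := rfl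
    rw [this, hd]
  have h4 : d' = s := hA X h3
  have h5 : r ∘ₗ Submodule.inclusion hker = 0 := by
    apply LinearMap.ext
    rintro ⟨k, hk⟩
    apply Subtype.ext
    simpa [hr, LinearMap.restrict_apply] using hk
  rw [← h4, hd', ← LinearMap.lTensor_comp_apply, h5, LinearMap.lTensor_zero]
  rfl

end AuxLemmas

theorem stmt_2 [IsNoetherianRing R] [IsLocalRing R]
    (E : Type u) [AddCommGroup E] [Module R E]
    (hE : IsInjectiveHull R (R ⧸ maximalIdeal R) E)
    (M : Type u) [AddCommGroup M] [Module R M]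
    (U : Submodule R M)
    (hU : IsMatlisReflexive R E U)
    (hMU : IsQuasiReflexive R E (M ⧸ U)) :
    IsQuasiReflexive R E M := by
  classical
  unfold IsQuasiReflexive IsPureEssentialEmb IsPureEssential at hMU ⊢
  obtain ⟨hinj', hpure', hess'⟩ := hMU
  set π := U.mkQ with hπ
  set πd : ((M ⧸ U) →ₗ[R] E) →ₗ[R] (M →ₗ[R] E) := LinearMap.lcomp R E π with hπd
  set q : ((M →ₗ[R] E) →ₗ[R] E) →ₗ[R] (((M ⧸ U) →ₗ[R] E) →ₗ[R] E) :=
    LinearMap.lcomp R E πd with hq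
  have hcomm : ∀ m : M, q (matlisEval R E M m) = matlisEval R E (M ⧸ U) (π m) := fun m => rfl
  have hπsurj : Function.Surjective π := Submodule.mkQ_surjective U
  have hπdinj : Function.Injective πd := by
    rw [injective_iff_map_eq_zero]
    intro ζ hz
    apply LinearMap.ext
    intro w
    obtain ⟨m, rfl⟩ := hπsurj w
    exact LinearMap.congr_fun hz m
  have hqsurj : Function.Surjective q := by
    intro ζ
    obtain ⟨ξ, hξ⟩ := hE.1.out πd hπdinj ζ
    exact ⟨ξ, LinearMap.ext hξ⟩
  have hkerq : LinearMap.ker q = U.map (matlisEval R E M) := by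
    apply le_antisymm
    · intro ξ hξ
      have hξ0 : q ξ = 0 := hξ
      set res : (M →ₗ[R] E) →ₗ[R] (↥U →ₗ[R] E) := LinearMap.lcomp R E U.subtype with hres
      have hressurj : Function.Surjective res := by
        intro h
        obtain ⟨F, hF⟩ := hE.1.out U.subtype (Submodule.injective_subtype U) h
        exact ⟨F, LinearMap.ext hF⟩
      have hkr : LinearMap.ker res ≤ LinearMap.ker ξ := by
        intro f hf
        have hf0 : res f = 0 := hf
        have hU0 : U ≤ LinearMap.ker f := by
          intro u hu
          exact LinearMap.congr_fun hf0 ⟨u, hu⟩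
        have hfac : πd (U.liftQ f hU0) = f := U.liftQ_mkQ f hU0
        have : ξ f = q ξ (U.liftQ f hU0) := (congrArg ξ hfac).symm
        rw [LinearMap.mem_ker, this, hξ0]
        rfl
      obtain ⟨ζ, hζ⟩ := exists_factor res hressurj ξ hkr
      obtain ⟨u, hu⟩ := hU.2 ζ
      refine Submodule.mem_map.mpr ⟨(u : M), u.2, ?_⟩
      apply LinearMap.ext
      intro f
      have h1 : ξ f = f (u : M) := by rw [← hζ f, ← hu]; rfl
      exact h1.symm
    · rintro ξ ⟨u, hu, rfl⟩
      rw [LinearMap.mem_ker, hcomm u]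
      have hπu : π u = 0 := (Submodule.Quotient.mk_eq_zero U).mpr hu
      rw [hπu, map_zero]
  have hkerle : LinearMap.ker q ≤ LinearMap.range (matlisEval R E M) := by
    rw [hkerq]
    rintro ξ ⟨u, _, rfl⟩
    exact ⟨u, rfl⟩
  refine ⟨ev_inj hE, isPureSubmodule_range (matlisEval R E M)
    (fun X _ _ => lTensor_ev_inj hE X), ?_⟩
  intro X hXinf hXpure
  set X' : Submodule R (((M ⧸ U) →ₗ[R] E) →ₗ[R] E) := X.map q with hX'
  have hB : X' ⊓ LinearMap.range (matlisEval R E (M ⧸ U)) = ⊥ := by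
    rw [eq_bot_iff]
    rintro y hy
    obtain ⟨hy1, hy2⟩ := Submodule.mem_inf.mp hy
    obtain ⟨x, hxX, rfl⟩ := Submodule.mem_map.mp hy1
    obtain ⟨w, hw⟩ := hy2
    obtain ⟨z, rfl⟩ := hπsurj w
    have h5 : x - matlisEval R E M z ∈ LinearMap.ker q := by
      rw [LinearMap.mem_ker, map_sub, hcomm z, hw, sub_self]
    have h6 : x ∈ LinearMap.range (matlisEval R E M) := by
      obtain ⟨m, hm⟩ := hkerle h5
      refine ⟨m + z, ?_⟩
      rw [map_add, hm]
      abel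
    have hx0 : x ∈ (⊥ : Submodule R ((M →ₗ[R] E) →ₗ[R] E)) :=
      hXinf ▸ Submodule.mem_inf.mpr ⟨hxX, h6⟩
    rw [Submodule.mem_bot] at hx0
    rw [hx0, map_zero]
    exact Submodule.zero_mem ⊥
  have hle1 : X ≤ LinearMap.ker (X'.mkQ ∘ₗ q) := by
    intro x hx
    rw [LinearMap.mem_ker, LinearMap.comp_apply, Submodule.mkQ_apply,
      Submodule.Quotient.mk_eq_zero]
    exact Submodule.mem_map_of_mem hx
  set gbar := X.liftQ (X'.mkQ ∘ₗ q) hle1 with hgbar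
  have hgbar_mk : ∀ ξ, gbar (X.mkQ ξ) = X'.mkQ (q ξ) := fun ξ => rfl
  have hgbar_surj : Function.Surjective gbar := by
    intro y
    obtain ⟨w, rfl⟩ := X'.mkQ_surjective y
    obtain ⟨ξ, rfl⟩ := hqsurj w
    exact ⟨X.mkQ ξ, rfl⟩
  have hkerbar : LinearMap.ker gbar ≤ (LinearMap.range (matlisEval R E M)).map X.mkQ := by
    intro a ha
    obtain ⟨ξ, rfl⟩ := X.mkQ_surjective a
    rw [LinearMap.mem_ker, hgbar_mk, Submodule.mkQ_apply, Submodule.Quotient.mk_eq_zero] at ha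
    obtain ⟨x, hxX, hxq⟩ := Submodule.mem_map.mp ha
    have h7 : ξ - x ∈ LinearMap.ker q := by
      rw [LinearMap.mem_ker, map_sub, hxq, sub_self]
    obtain ⟨m, hm⟩ := hkerle h7
    refine Submodule.mem_map.mpr ⟨matlisEval R E M m, ⟨m, rfl⟩, ?_⟩
    rw [Submodule.mkQ_apply, Submodule.mkQ_apply, Submodule.Quotient.eq, hm]
    simpa using X.neg_mem hxX
  have hpureC := isPureSubmodule_map gbar hgbar_surj _ hkerbar hXpure
  have himg : ((LinearMap.range (matlisEval R E M)).map X.mkQ).map gbar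
      = (LinearMap.range (matlisEval R E (M ⧸ U))).map X'.mkQ := by
    have h8 : gbar ∘ₗ X.mkQ = X'.mkQ ∘ₗ q := rfl
    have h9 : q ∘ₗ matlisEval R E M = matlisEval R E (M ⧸ U) ∘ₗ π := LinearMap.ext hcomm
    rw [← Submodule.map_comp, h8, Submodule.map_comp, ← LinearMap.range_comp, h9,
      LinearMap.range_comp, LinearMap.range_eq_top.mpr hπsurj, Submodule.map_top]
  rw [himg] at hpureC
  have hX'bot : X' = ⊥ := hess' X' hB hpureC
  rw [eq_bot_iff]
  intro x hx
  have hqx : q x = 0 := by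
    have : q x ∈ X' := Submodule.mem_map_of_mem hx
    rwa [hX'bot, Submodule.mem_bot] at this
  have h10 : x ∈ LinearMap.range (matlisEval R E M) := hkerle hqx
  have h11 : x ∈ X ⊓ LinearMap.range (matlisEval R E M) := Submodule.mem_inf.mpr ⟨hx, h10⟩
  rwa [hXinf] at h11
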